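/- arXiv:2002.12362 — 3 statements merged into one kernel-verified Lean document; each statement's English description precedes it below -/
import Mathlib

section
/- Validity of the big-M MILP formulation of individual output selection: fix a DMU k with at least one strictly positive input, an integer p with 1 ≤ p ≤ O, and a constant M such that M ≥ 1/y_o^(k) for every output o with y_o^(k) > 0. Then the supremum, over all (α, β, z) with α ∈ ℝ^I, α ≥ 0, β ∈ ℝ^O, β ≥ 0, z ∈ {0,1}^O, Σ_{o=1}^O β_o y_o^(j) ≤ Σ_{i=1}^I α_i x_i^(j) for all j = 1,…,K, Σ_{i=1}^I α_i x_i^(k) = 1, β_o ≤ M z_o for all o, and Σ_{o=1}^O z_o = p, of the objective Σ_{o=1}^O β_o y_o^(k), equals v^(k)(p) = max { E^(k)(S) : S ⊆ {1,…,O}, |S| = p }. -/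
open Finset

/-- Feasible set `F^(k)(S)` of the CRS input-oriented DEA model of DMU `k`
with allowed output set `S`. -/
def DEAfeasible {K I O : ℕ} (x : Fin K → Fin I → ℝ) (y : Fin K → Fin O → ℝ)
    (k : Fin K) (S : Finset (Fin O)) (α : Fin I → ℝ) (β : Fin O → ℝ) : Prop :=
  (∀ i, 0 ≤ α i) ∧ (∀ o, 0 ≤ β o) ∧ (∀ o, o ∉ S → β o = 0) ∧
  (∀ j, ∑ o, β o * y j o ≤ ∑ i, α i * x j i) ∧ (∑ i, α i * x k i = 1)

/-- CRS input-oriented DEA efficiency `E^(k)(S)` of DMU `k` with allowed outputs `S`. -/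
noncomputable def DEAeff {K I O : ℕ} (x : Fin K → Fin I → ℝ) (y : Fin K → Fin O → ℝ)
    (k : Fin K) (S : Finset (Fin O)) : ℝ :=
  sSup {t | ∃ α β, DEAfeasible x y k S α β ∧ t = ∑ o, β o * y k o}

/-- Individual selection value `v^(k)(p)`. -/
noncomputable def vInd {K I O : ℕ} (x : Fin K → Fin I → ℝ) (y : Fin K → Fin O → ℝ)
    (k : Fin K) (p : ℕ) : ℝ :=
  sSup {t | ∃ S : Finset (Fin O), S.card = p ∧ t = DEAeff x y k S}

/-- Joint selection value `v(p)`. -/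
noncomputable def vJoint {K I O : ℕ} (x : Fin K → Fin I → ℝ) (y : Fin K → Fin O → ℝ)
    (p : ℕ) : ℝ :=
  sSup {t | ∃ S : Finset (Fin O), S.card = p ∧
    t = (1 / (K : ℝ)) * ∑ k, DEAeff x y k S}


section
variable {K I O : ℕ} (x : Fin K → Fin I → ℝ) (y : Fin K → Fin O → ℝ)

lemma dea_mem_le_one {k : Fin K} {S : Finset (Fin O)} {t : ℝ}
    (ht : t ∈ {t | ∃ α β, DEAfeasible x y k S α β ∧ t = ∑ o, β o * y k o}) : t ≤ 1 := by
  obtain ⟨α, β, ⟨hα, hβ, hS, hcon, hnorm⟩, rfl⟩ := ht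
  calc ∑ o, β o * y k o ≤ ∑ i, α i * x k i := hcon k
    _ = 1 := hnorm

lemma baseline (hx : ∀ j i, 0 ≤ x j i) (k : Fin K) (hk : ∃ i, 0 < x k i) :
    ∃ α : Fin I → ℝ, (∀ i, 0 ≤ α i) ∧ (∑ i, α i * x k i = 1) := by
  obtain ⟨i, hi⟩ := hk
  refine ⟨fun i' => if i' = i then 1 / x k i else 0, fun i' => ?_, ?_⟩
  · dsimp only; split
    · positivity
    · exact le_refl 0
  · dsimp only
    simp only [ite_mul, zero_mul, Finset.sum_ite_eq' Finset.univ i, Finset.mem_univ, if_true]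
    exact one_div_mul_cancel hi.ne'

lemma zero_mem_dea (hx : ∀ j i, 0 ≤ x j i) (k : Fin K) (hk : ∃ i, 0 < x k i)
    (S : Finset (Fin O)) :
    (0:ℝ) ∈ {t | ∃ α β, DEAfeasible x y k S α β ∧ t = ∑ o, β o * y k o} := by
  obtain ⟨α, hα, hnorm⟩ := baseline x hx k hk
  refine ⟨α, fun _ => 0, ⟨hα, fun _ => le_refl 0, fun _ _ => rfl, fun j => ?_, hnorm⟩, by simp⟩
  simp only [zero_mul, Finset.sum_const_zero]
  exact Finset.sum_nonneg fun i _ => mul_nonneg (hα i) (hx j i)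

end

theorem bigM_MILP_valid'
    {K I O : ℕ} (x : Fin K → Fin I → ℝ) (y : Fin K → Fin O → ℝ)
    (hx : ∀ j i, 0 ≤ x j i) (hy : ∀ j o, 0 ≤ y j o)
    (k : Fin K) (hk : ∃ i, 0 < x k i)
    (p : ℕ) (hp1 : 1 ≤ p) (hpO : p ≤ O)
    (M : ℝ) (hM : ∀ o, 0 < y k o → 1 / y k o ≤ M) :
    sSup {t | ∃ (α : Fin I → ℝ) (β : Fin O → ℝ) (z : Fin O → ℝ),
        (∀ i, 0 ≤ α i) ∧ (∀ o, 0 ≤ β o) ∧ (∀ o, z o = 0 ∨ z o = 1) ∧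
        (∀ j, ∑ o, β o * y j o ≤ ∑ i, α i * x j i) ∧
        (∑ i, α i * x k i = 1) ∧
        (∀ o, β o ≤ M * z o) ∧ (∑ o, z o) = (p : ℝ) ∧
        t = ∑ o, β o * y k o}
      = sSup {t | ∃ S : Finset (Fin O), S.card = p ∧ t = DEAeff x y k S} := by
  set A := {t | ∃ (α : Fin I → ℝ) (β : Fin O → ℝ) (z : Fin O → ℝ),
        (∀ i, 0 ≤ α i) ∧ (∀ o, 0 ≤ β o) ∧ (∀ o, z o = 0 ∨ z o = 1) ∧
        (∀ j, ∑ o, β o * y j o ≤ ∑ i, α i * x j i) ∧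
        (∑ i, α i * x k i = 1) ∧
        (∀ o, β o ≤ M * z o) ∧ (∑ o, z o) = (p : ℝ) ∧
        t = ∑ o, β o * y k o} with hA
  -- a set S of cardinality p exists
  obtain ⟨S₀, _, hS₀⟩ : ∃ S₀ ⊆ (univ : Finset (Fin O)), S₀.card = p :=
    Finset.exists_subset_card_eq (by simpa using hpO)
  -- the DEA sets are nonempty and bounded above
  have hdeane : ∀ S : Finset (Fin O),
      {t | ∃ α β, DEAfeasible x y k S α β ∧ t = ∑ o, β o * y k o}.Nonempty :=
    fun S => ⟨0, zero_mem_dea x y hx k hk S⟩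
  have hdeabd : ∀ S : Finset (Fin O),
      BddAbove {t | ∃ α β, DEAfeasible x y k S α β ∧ t = ∑ o, β o * y k o} :=
    fun S => ⟨1, fun t ht => dea_mem_le_one x y ht⟩
  have heff_le_one : ∀ S : Finset (Fin O), DEAeff x y k S ≤ 1 :=
    fun S => csSup_le (hdeane S) (fun t ht => dea_mem_le_one x y ht)
  have hVne : {t | ∃ S : Finset (Fin O), S.card = p ∧ t = DEAeff x y k S}.Nonempty :=
    ⟨DEAeff x y k S₀, S₀, hS₀, rfl⟩
  have hVbd : BddAbove {t | ∃ S : Finset (Fin O), S.card = p ∧ t = DEAeff x y k S} :=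
    ⟨1, fun t ⟨S, _, ht⟩ => ht ▸ heff_le_one S⟩
  have hAbd : BddAbove A := by
    refine ⟨1, fun t ht => ?_⟩
    obtain ⟨α, β, z, hα, hβ, hz, hcon, hnorm, hbM, hzs, rfl⟩ := ht
    calc ∑ o, β o * y k o ≤ ∑ i, α i * x k i := hcon k
      _ = 1 := hnorm
  by_cases hM0 : 0 ≤ M
  · -- main case
    -- A is nonempty
    have hAne : A.Nonempty := by
      obtain ⟨α, hα, hnorm⟩ := baseline x hx k hk
      refine ⟨0, α, fun _ => 0, fun o => if o ∈ S₀ then 1 else 0,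
        hα, fun _ => le_refl 0, fun o => by dsimp only; split <;> simp,
        fun j => ?_, hnorm, fun o => ?_, ?_, by simp⟩
      · simp only [zero_mul, Finset.sum_const_zero]
        exact Finset.sum_nonneg fun i _ => mul_nonneg (hα i) (hx j i)
      · dsimp only; split
        · simpa using hM0
        · simp
      · simp [Finset.sum_boole, hS₀]
    apply le_antisymm
    · -- sSup A ≤ sSup V
      refine csSup_le hAne fun t ht => ?_
      obtain ⟨α, β, z, hα, hβ, hz, hcon, hnorm, hbM, hzs, rfl⟩ := ht
      set S := univ.filter (fun o => z o = 1) with hSdef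
      have hcard : S.card = p := by
        have : ∀ o ∈ (univ : Finset (Fin O)), z o = if z o = 1 then (1:ℝ) else 0 := by
          intro o _; rcases hz o with h | h <;> simp [h]
        rw [Finset.sum_congr rfl this, Finset.sum_boole] at hzs
        exact_mod_cast hzs
      have hβ0 : ∀ o, o ∉ S → β o = 0 := by
        intro o ho
        have hz0 : z o = 0 := by
          rcases hz o with h | h
          · exact h
          · exact absurd (Finset.mem_filter.mpr ⟨Finset.mem_univ o, h⟩) ho
        exact le_antisymm (by simpa [hz0] using hbM o) (hβ o)
      have h1 : (∑ o, β o * y k o) ≤ DEAeff x y k S :=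
        le_csSup (hdeabd S) ⟨α, β, ⟨hα, hβ, hβ0, hcon, hnorm⟩, rfl⟩
      exact h1.trans (le_csSup hVbd ⟨S, hcard, rfl⟩)
    · -- sSup V ≤ sSup A
      refine csSup_le hVne fun v hv => ?_
      obtain ⟨S, hcard, rfl⟩ := hv
      refine csSup_le (hdeane S) fun t ht => ?_
      obtain ⟨α, β, ⟨hα, hβ, hβ0, hcon, hnorm⟩, rfl⟩ := ht
      set β' : Fin O → ℝ := fun o => if y k o = 0 then 0 else β o with hβ'def
      have hβ'le : ∀ o, β' o ≤ β o := by
        intro o; by_cases h : y k o = 0 <;> simp [hβ'def, h, hβ o]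
      have hβ'nn : ∀ o, 0 ≤ β' o := by
        intro o; by_cases h : y k o = 0 <;> simp [hβ'def, h, hβ o]
      have hobj : ∀ j, ∑ o, β' o * y j o ≤ ∑ i, α i * x j i := fun j =>
        le_trans (Finset.sum_le_sum fun o _ =>
          mul_le_mul_of_nonneg_right (hβ'le o) (hy j o)) (hcon j)
      have hsame : ∑ o, β' o * y k o = ∑ o, β o * y k o := by
        refine Finset.sum_congr rfl fun o _ => ?_
        by_cases h : y k o = 0 <;> simp [hβ'def, h]
      refine le_csSup hAbd ⟨α, β', fun o => if o ∈ S then 1 else 0,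
        hα, hβ'nn, fun o => by dsimp only; split <;> simp,
        hobj, hnorm, fun o => ?_, by simp [Finset.sum_boole, hcard], hsame.symm⟩
      by_cases hoS : o ∈ S
      · simp only [hoS, if_true, mul_one]
        by_cases h : y k o = 0
        · simpa [hβ'def, h] using hM0
        · have hypos : 0 < y k o := lt_of_le_of_ne (hy k o) (Ne.symm h)
          have h1 : β o * y k o ≤ 1 := by
            calc β o * y k o
                ≤ ∑ o', β o' * y k o' :=
                  Finset.single_le_sum (f := fun o' => β o' * y k o')
                    (fun o' _ => mul_nonneg (hβ o') (hy k o')) (Finset.mem_univ o)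
              _ ≤ ∑ i, α i * x k i := hcon k
              _ = 1 := hnorm
          have hbb : β' o = β o := by simp [hβ'def, h]
          rw [hbb]
          calc β o ≤ 1 / y k o := (le_div_iff₀ hypos).mpr h1
            _ ≤ M := hM o hypos
      · simp only [hoS, if_false, mul_zero]
        by_cases h : y k o = 0 <;> simp [hβ'def, h, hβ0 o hoS]
  · -- M < 0 : MILP infeasible and all outputs of k are zero
    push_neg at hM0
    have hy0 : ∀ o, y k o = 0 := by
      intro o
      by_contra h
      have hypos : 0 < y k o := lt_of_le_of_ne (hy k o) (Ne.symm h)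
      exact absurd ((hM o hypos).trans_lt hM0) (not_lt.mpr (le_of_lt (by positivity)))
    have hAempty : A = ∅ := by
      rw [Set.eq_empty_iff_forall_notMem]
      rintro t ⟨α, β, z, hα, hβ, hz, hcon, hnorm, hbM, hzs, rfl⟩
      have : ∃ o, z o = 1 := by
        by_contra h
        push_neg at h
        have hz0 : ∀ o, z o = 0 := fun o => (hz o).resolve_right (h o)
        rw [Finset.sum_congr rfl (fun o _ => hz0 o), Finset.sum_const_zero] at hzs
        have : (p : ℝ) ≠ 0 := by positivity
        exact this hzs.symm
      obtain ⟨o, ho⟩ := this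
      have := (hβ o).trans (hbM o)
      rw [ho, mul_one] at this
      exact absurd (this.trans_lt hM0) (lt_irrefl 0)
    have heff0 : ∀ S : Finset (Fin O), DEAeff x y k S = 0 := by
      intro S
      refine le_antisymm (csSup_le (hdeane S) fun t ht => ?_)
        (le_csSup (hdeabd S) (zero_mem_dea x y hx k hk S))
      obtain ⟨α, β, _, rfl⟩ := ht
      simp [hy0]
    rw [hAempty, Real.sSup_empty]
    refine le_antisymm (le_csSup hVbd ⟨S₀, hS₀, (heff0 S₀).symm⟩)
      (csSup_le hVne fun t ht => ?_)
    obtain ⟨S, _, rfl⟩ := ht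
    exact le_of_eq (heff0 S)


/-- Validity of the big-M MILP formulation of individual output selection:
for a DMU `k` with a strictly positive input, `1 ≤ p ≤ O`, and `M ≥ 1 / y k o` for every
output `o` with `y k o > 0`, the supremum of the MILP objective over its feasible region
equals the individual selection value `v^(k)(p)`. -/
theorem bigM_MILP_valid
    {K I O : ℕ} (x : Fin K → Fin I → ℝ) (y : Fin K → Fin O → ℝ)
    (hx : ∀ j i, 0 ≤ x j i) (hy : ∀ j o, 0 ≤ y j o)
    (k : Fin K) (hk : ∃ i, 0 < x k i)
    (p : ℕ) (hp1 : 1 ≤ p) (hpO : p ≤ O)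
    (M : ℝ) (hM : ∀ o, 0 < y k o → 1 / y k o ≤ M) :
    sSup {t | ∃ (α : Fin I → ℝ) (β : Fin O → ℝ) (z : Fin O → ℝ),
        (∀ i, 0 ≤ α i) ∧ (∀ o, 0 ≤ β o) ∧ (∀ o, z o = 0 ∨ z o = 1) ∧
        (∀ j, ∑ o, β o * y j o ≤ ∑ i, α i * x j i) ∧
        (∑ i, α i * x k i = 1) ∧
        (∀ o, β o ≤ M * z o) ∧ (∑ o, z o) = (p : ℝ) ∧
        t = ∑ o, β o * y k o}
      = vInd x y k p :=
  bigM_MILP_valid' x y hx hy k hk p hp1 hpO M hM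
end

section
/- The joint selection value v(p) is not a concave function of p in general: for the Table 1 instance, v(1) = 4/5, v(2) = 13/15, and v(3) = 1, so that v(3) − v(2) > v(2) − v(1). -/
open Finset

/-- Table 1 instance: single input equal to 1 for each of the 5 DMUs. -/
def xT1 : Fin 5 → Fin 1 → ℝ := fun _ _ => 1

/-- Table 1 instance: the 4 outputs of the 5 DMUs. -/
noncomputable def yT1 : Fin 5 → Fin 4 → ℝ :=
  ![![0.6, 1/3, 1/3, 1/3],
    ![0.7, 1/3, 1/3, 1/3],
    ![0.8, 1, 0, 0],
    ![0.9, 0, 1, 0],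
    ![1, 0, 0, 1]]

lemma effUB (k : Fin 5) (S : Finset (Fin 4)) (v : ℝ) (hv : 0 ≤ v)
    (h : ∀ α β, DEAfeasible xT1 yT1 k S α β → ∑ o, β o * yT1 k o ≤ v) :
    DEAeff xT1 yT1 k S ≤ v := by
  refine Real.sSup_le ?_ hv
  rintro t ⟨α, β, hf, rfl⟩
  exact h α β hf

lemma effBdd (k : Fin 5) (S : Finset (Fin 4)) :
    BddAbove {t | ∃ α β, DEAfeasible xT1 yT1 k S α β ∧ t = ∑ o, β o * yT1 k o} := by
  refine ⟨1, ?_⟩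
  rintro t ⟨α, β, hf, rfl⟩
  exact (hf.2.2.2.1 k).trans_eq hf.2.2.2.2

lemma effLB (k : Fin 5) (S : Finset (Fin 4)) (β : Fin 4 → ℝ)
    (hf : DEAfeasible xT1 yT1 k S (fun _ => 1) β) :
    ∑ o, β o * yT1 k o ≤ DEAeff xT1 yT1 k S :=
  le_csSup (effBdd k S) ⟨_, β, hf, rfl⟩

lemma eff_le_one (k : Fin 5) (S : Finset (Fin 4)) : DEAeff xT1 yT1 k S ≤ 1 :=
  effUB k S 1 zero_le_one fun _ _ hf => (hf.2.2.2.1 k).trans_eq hf.2.2.2.2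

lemma objE (β : Fin 4 → ℝ) (k : Fin 5) :
    ∑ o, β o * yT1 k o
      = β 0 * yT1 k 0 + β 1 * yT1 k 1 + β 2 * yT1 k 2 + β 3 * yT1 k 3 :=
  Fin.sum_univ_four _

lemma feasE {k : Fin 5} {S : Finset (Fin 4)} {α : Fin 1 → ℝ} {β : Fin 4 → ℝ}
    (hf : DEAfeasible xT1 yT1 k S α β) :
    (∀ o, 0 ≤ β o) ∧ (∀ o, o ∉ S → β o = 0) ∧
    (0.6 * β 0 + β 1 / 3 + β 2 / 3 + β 3 / 3 ≤ 1) ∧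
    (0.7 * β 0 + β 1 / 3 + β 2 / 3 + β 3 / 3 ≤ 1) ∧
    (0.8 * β 0 + β 1 ≤ 1) ∧ (0.9 * β 0 + β 2 ≤ 1) ∧ (β 0 + β 3 ≤ 1) := by
  obtain ⟨hα, hβ, hz, hc, hn⟩ := hf
  have hn' : α 0 = 1 := by simpa [xT1] using hn
  have h1 := hc 0; have h2 := hc 1; have h3 := hc 2; have h4 := hc 3; have h5 := hc 4
  rw [objE] at h1 h2 h3 h4 h5
  simp only [xT1, Fin.sum_univ_one, mul_one, hn'] at h1 h2 h3 h4 h5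
  norm_num [yT1, Matrix.cons_val_zero, Matrix.cons_val_one, Matrix.cons_val_two, Matrix.cons_val_three, Matrix.cons_val_four] at h1 h2 h3 h4 h5
  refine ⟨hβ, hz, by linarith, by linarith, by linarith, by linarith, by linarith⟩

lemma feas (S : Finset (Fin 4)) (β : Fin 4 → ℝ) (hβ : ∀ o, 0 ≤ β o)
    (hz : ∀ o, o ∉ S → β o = 0)
    (hc : ∀ j, ∑ o, β o * yT1 j o ≤ 1) (k : Fin 5) :
    DEAfeasible xT1 yT1 k S (fun _ => 1) β := by
  refine ⟨fun _ => zero_le_one, hβ, hz, fun j => ?_, by simp [xT1]⟩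
  simpa [xT1] using hc j

lemma eff_S0 (k : Fin 5) : DEAeff xT1 yT1 k {0} = ![0.6, 0.7, 0.8, 0.9, 1] k := by
  refine le_antisymm ?_ ?_
  · refine effUB k _ _ (by fin_cases k <;> norm_num) ?_
    rintro α β hf
    obtain ⟨hβ, hz, h1, h2, h3, h4, h5⟩ := feasE hf
    have z1 := hz 1 (by decide); have z2 := hz 2 (by decide); have z3 := hz 3 (by decide)
    rw [objE]
    fin_cases k <;> norm_num [yT1, Matrix.cons_val_zero, Matrix.cons_val_one, Matrix.cons_val_two, Matrix.cons_val_three, Matrix.cons_val_four] <;>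
      linarith [hβ 0, hβ 1, hβ 2, hβ 3]
  · have hf := feas {0} ![1, 0, 0, 0] (by intro o; fin_cases o <;> norm_num)
      (by intro o ho; fin_cases o <;> simp_all)
      (by intro j; rw [objE]; fin_cases j <;>
        norm_num [yT1, Matrix.cons_val_zero, Matrix.cons_val_one, Matrix.cons_val_two, Matrix.cons_val_three, Matrix.cons_val_four]) k
    refine le_trans (le_of_eq ?_) (effLB k _ _ hf)
    rw [objE]
    fin_cases k <;> norm_num [yT1, Matrix.cons_val_zero, Matrix.cons_val_one, Matrix.cons_val_two, Matrix.cons_val_three, Matrix.cons_val_four]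

lemma eff_S01 (k : Fin 5) : DEAeff xT1 yT1 k {0, 1} = ![2/3, 23/30, 1, 9/10, 1] k := by
  refine le_antisymm ?_ ?_
  · refine effUB k _ _ (by fin_cases k <;> norm_num) ?_
    rintro α β hf
    obtain ⟨hβ, hz, h1, h2, h3, h4, h5⟩ := feasE hf
    have z2 := hz 2 (by decide); have z3 := hz 3 (by decide)
    rw [objE]
    fin_cases k <;> norm_num [yT1, Matrix.cons_val_zero, Matrix.cons_val_one, Matrix.cons_val_two, Matrix.cons_val_three, Matrix.cons_val_four] <;>
      linarith [hβ 0, hβ 1, hβ 2, hβ 3]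
  · have hf := feas {0, 1} ![1, 1/5, 0, 0] (by intro o; fin_cases o <;> norm_num)
      (by intro o ho; fin_cases o <;> simp_all)
      (by intro j; rw [objE]; fin_cases j <;>
        norm_num [yT1, Matrix.cons_val_zero, Matrix.cons_val_one, Matrix.cons_val_two, Matrix.cons_val_three, Matrix.cons_val_four]) k
    refine le_trans (le_of_eq ?_) (effLB k _ _ hf)
    rw [objE]
    fin_cases k <;> norm_num [yT1, Matrix.cons_val_zero, Matrix.cons_val_one, Matrix.cons_val_two, Matrix.cons_val_three, Matrix.cons_val_four]

lemma eff_S123 (k : Fin 5) : DEAeff xT1 yT1 k {1, 2, 3} = 1 := by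
  refine le_antisymm (eff_le_one k _) ?_
  have hf := feas {1, 2, 3} ![0, 1, 1, 1] (by intro o; fin_cases o <;> norm_num)
    (by intro o ho; fin_cases o <;> simp_all)
    (by intro j; rw [objE]; fin_cases j <;>
      norm_num [yT1, Matrix.cons_val_zero, Matrix.cons_val_one, Matrix.cons_val_two, Matrix.cons_val_three, Matrix.cons_val_four]) k
  refine le_trans (le_of_eq ?_) (effLB k _ _ hf)
  rw [objE]
  fin_cases k <;> norm_num [yT1, Matrix.cons_val_zero, Matrix.cons_val_one, Matrix.cons_val_two, Matrix.cons_val_three, Matrix.cons_val_four]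

lemma sumUB (S : Finset (Fin 4)) (v : Fin 5 → ℝ)
    (h : ∀ (k : Fin 5) (β : Fin 4 → ℝ), (∀ o, 0 ≤ β o) → (∀ o, o ∉ S → β o = 0) →
      0.6 * β 0 + β 1 / 3 + β 2 / 3 + β 3 / 3 ≤ 1 →
      0.7 * β 0 + β 1 / 3 + β 2 / 3 + β 3 / 3 ≤ 1 →
      0.8 * β 0 + β 1 ≤ 1 → 0.9 * β 0 + β 2 ≤ 1 → β 0 + β 3 ≤ 1 →
      β 0 * yT1 k 0 + β 1 * yT1 k 1 + β 2 * yT1 k 2 + β 3 * yT1 k 3 ≤ v k)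
    (hv : ∀ k, 0 ≤ v k) :
    ∑ k, DEAeff xT1 yT1 k S ≤ ∑ k, v k := by
  refine Finset.sum_le_sum fun k _ => ?_
  refine effUB k S (v k) (hv k) ?_
  intro α β hf
  obtain ⟨hβ, hz, h1, h2, h3, h4, h5⟩ := feasE hf
  rw [objE]
  exact h k β hβ hz h1 h2 h3 h4 h5

lemma sum_S0 : ∑ k, DEAeff xT1 yT1 k {0} ≤ 4 := by
  rw [Fin.sum_univ_five]
  simp only [eff_S0]
  norm_num [Matrix.cons_val_zero, Matrix.cons_val_one, Matrix.cons_val_two, Matrix.cons_val_three, Matrix.cons_val_four]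

lemma sum_S1 : ∑ k, DEAeff xT1 yT1 k {1} ≤ 4 := by
  refine le_trans (sumUB {1} ![1/3, 1/3, 1, 0, 0] ?_ (by intro k; fin_cases k <;> norm_num))
    (by rw [Fin.sum_univ_five]; norm_num [Matrix.cons_val_zero, Matrix.cons_val_one, Matrix.cons_val_two, Matrix.cons_val_three, Matrix.cons_val_four])
  intro k β hβ hz h1 h2 h3 h4 h5
  have z0 := hz 0 (by decide); have z2 := hz 2 (by decide); have z3 := hz 3 (by decide)
  fin_cases k <;> norm_num [yT1, Matrix.cons_val_zero, Matrix.cons_val_one, Matrix.cons_val_two, Matrix.cons_val_three, Matrix.cons_val_four] <;>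
    linarith [hβ 0, hβ 1, hβ 2, hβ 3]

lemma sum_S2 : ∑ k, DEAeff xT1 yT1 k {2} ≤ 4 := by
  refine le_trans (sumUB {2} ![1/3, 1/3, 0, 1, 0] ?_ (by intro k; fin_cases k <;> norm_num))
    (by rw [Fin.sum_univ_five]; norm_num [Matrix.cons_val_zero, Matrix.cons_val_one, Matrix.cons_val_two, Matrix.cons_val_three, Matrix.cons_val_four])
  intro k β hβ hz h1 h2 h3 h4 h5
  have z0 := hz 0 (by decide); have z1 := hz 1 (by decide); have z3 := hz 3 (by decide)
  fin_cases k <;> norm_num [yT1, Matrix.cons_val_zero, Matrix.cons_val_one, Matrix.cons_val_two, Matrix.cons_val_three, Matrix.cons_val_four] <;>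
    linarith [hβ 0, hβ 1, hβ 2, hβ 3]

lemma sum_S3 : ∑ k, DEAeff xT1 yT1 k {3} ≤ 4 := by
  refine le_trans (sumUB {3} ![1/3, 1/3, 0, 0, 1] ?_ (by intro k; fin_cases k <;> norm_num))
    (by rw [Fin.sum_univ_five]; norm_num [Matrix.cons_val_zero, Matrix.cons_val_one, Matrix.cons_val_two, Matrix.cons_val_three, Matrix.cons_val_four])
  intro k β hβ hz h1 h2 h3 h4 h5
  have z0 := hz 0 (by decide); have z1 := hz 1 (by decide); have z2 := hz 2 (by decide)
  fin_cases k <;> norm_num [yT1, Matrix.cons_val_zero, Matrix.cons_val_one, Matrix.cons_val_two, Matrix.cons_val_three, Matrix.cons_val_four] <;>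
    linarith [hβ 0, hβ 1, hβ 2, hβ 3]

lemma sum_S01 : ∑ k, DEAeff xT1 yT1 k {0, 1} ≤ 13/3 := by
  rw [Fin.sum_univ_five]
  simp only [eff_S01]
  norm_num [Matrix.cons_val_zero, Matrix.cons_val_one, Matrix.cons_val_two, Matrix.cons_val_three, Matrix.cons_val_four]

lemma sum_S02 : ∑ k, DEAeff xT1 yT1 k {0, 2} ≤ 13/3 := by
  refine le_trans (sumUB {0, 2} ![19/30, 11/15, 4/5, 1, 1] ?_
      (by intro k; fin_cases k <;> norm_num))
    (by rw [Fin.sum_univ_five]; norm_num [Matrix.cons_val_zero, Matrix.cons_val_one, Matrix.cons_val_two, Matrix.cons_val_three, Matrix.cons_val_four])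
  intro k β hβ hz h1 h2 h3 h4 h5
  have z1 := hz 1 (by decide); have z3 := hz 3 (by decide)
  fin_cases k <;> norm_num [yT1, Matrix.cons_val_zero, Matrix.cons_val_one, Matrix.cons_val_two, Matrix.cons_val_three, Matrix.cons_val_four] <;>
    linarith [hβ 0, hβ 1, hβ 2, hβ 3]

lemma sum_S03 : ∑ k, DEAeff xT1 yT1 k {0, 3} ≤ 13/3 := by
  refine le_trans (sumUB {0, 3} ![3/5, 7/10, 4/5, 9/10, 1] ?_
      (by intro k; fin_cases k <;> norm_num))
    (by rw [Fin.sum_univ_five]; norm_num [Matrix.cons_val_zero, Matrix.cons_val_one, Matrix.cons_val_two, Matrix.cons_val_three, Matrix.cons_val_four])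
  intro k β hβ hz h1 h2 h3 h4 h5
  have z1 := hz 1 (by decide); have z2 := hz 2 (by decide)
  fin_cases k <;> norm_num [yT1, Matrix.cons_val_zero, Matrix.cons_val_one, Matrix.cons_val_two, Matrix.cons_val_three, Matrix.cons_val_four] <;>
    linarith [hβ 0, hβ 1, hβ 2, hβ 3]

lemma sum_S12 : ∑ k, DEAeff xT1 yT1 k {1, 2} ≤ 13/3 := by
  refine le_trans (sumUB {1, 2} ![2/3, 2/3, 1, 1, 0] ?_
      (by intro k; fin_cases k <;> norm_num))
    (by rw [Fin.sum_univ_five]; norm_num [Matrix.cons_val_zero, Matrix.cons_val_one, Matrix.cons_val_two, Matrix.cons_val_three, Matrix.cons_val_four])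
  intro k β hβ hz h1 h2 h3 h4 h5
  have z0 := hz 0 (by decide); have z3 := hz 3 (by decide)
  fin_cases k <;> norm_num [yT1, Matrix.cons_val_zero, Matrix.cons_val_one, Matrix.cons_val_two, Matrix.cons_val_three, Matrix.cons_val_four] <;>
    linarith [hβ 0, hβ 1, hβ 2, hβ 3]

lemma sum_S13 : ∑ k, DEAeff xT1 yT1 k {1, 3} ≤ 13/3 := by
  refine le_trans (sumUB {1, 3} ![2/3, 2/3, 1, 0, 1] ?_
      (by intro k; fin_cases k <;> norm_num))
    (by rw [Fin.sum_univ_five]; norm_num [Matrix.cons_val_zero, Matrix.cons_val_one, Matrix.cons_val_two, Matrix.cons_val_three, Matrix.cons_val_four])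
  intro k β hβ hz h1 h2 h3 h4 h5
  have z0 := hz 0 (by decide); have z2 := hz 2 (by decide)
  fin_cases k <;> norm_num [yT1, Matrix.cons_val_zero, Matrix.cons_val_one, Matrix.cons_val_two, Matrix.cons_val_three, Matrix.cons_val_four] <;>
    linarith [hβ 0, hβ 1, hβ 2, hβ 3]

lemma sum_S23 : ∑ k, DEAeff xT1 yT1 k {2, 3} ≤ 13/3 := by
  refine le_trans (sumUB {2, 3} ![2/3, 2/3, 0, 1, 1] ?_
      (by intro k; fin_cases k <;> norm_num))
    (by rw [Fin.sum_univ_five]; norm_num [Matrix.cons_val_zero, Matrix.cons_val_one, Matrix.cons_val_two, Matrix.cons_val_three, Matrix.cons_val_four])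
  intro k β hβ hz h1 h2 h3 h4 h5
  have z0 := hz 0 (by decide); have z1 := hz 1 (by decide)
  fin_cases k <;> norm_num [yT1, Matrix.cons_val_zero, Matrix.cons_val_one, Matrix.cons_val_two, Matrix.cons_val_three, Matrix.cons_val_four] <;>
    linarith [hβ 0, hβ 1, hβ 2, hβ 3]

lemma vJbdd (p : ℕ) : BddAbove {t | ∃ S : Finset (Fin 4), S.card = p ∧
    t = (1 / ((5 : ℕ) : ℝ)) * ∑ k, DEAeff xT1 yT1 k S} := by
  refine ⟨1, ?_⟩
  rintro t ⟨S, hS, rfl⟩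
  have h := fun k => eff_le_one k S
  rw [Fin.sum_univ_five]
  push_cast
  linarith [h 0, h 1, h 2, h 3, h 4]

lemma vJ1 : vJoint xT1 yT1 1 = 4 / 5 := by
  refine le_antisymm (Real.sSup_le ?_ (by norm_num)) (le_csSup (vJbdd 1) ?_)
  · rintro t ⟨S, hS, rfl⟩
    have hS' : S ∈ Finset.univ.powersetCard 1 := by
      rw [Finset.mem_powersetCard]; exact ⟨Finset.subset_univ S, hS⟩
    have key : ∑ k, DEAeff xT1 yT1 k S ≤ 4 := by
      fin_cases hS' <;> first | exact sum_S0 | exact sum_S1 | exact sum_S2 | exact sum_S3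
    push_cast
    linarith
  · refine ⟨{0}, by decide, ?_⟩
    rw [Fin.sum_univ_five]
    simp only [eff_S0]
    norm_num [Matrix.cons_val_zero, Matrix.cons_val_one, Matrix.cons_val_two, Matrix.cons_val_three, Matrix.cons_val_four]

lemma vJ2 : vJoint xT1 yT1 2 = 13 / 15 := by
  refine le_antisymm (Real.sSup_le ?_ (by norm_num)) (le_csSup (vJbdd 2) ?_)
  · rintro t ⟨S, hS, rfl⟩
    have hS' : S ∈ Finset.univ.powersetCard 2 := by
      rw [Finset.mem_powersetCard]; exact ⟨Finset.subset_univ S, hS⟩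
    have key : ∑ k, DEAeff xT1 yT1 k S ≤ 13/3 := by
      fin_cases hS' <;>
        first
        | exact sum_S01
        | exact sum_S02
        | exact sum_S03
        | exact sum_S12
        | exact sum_S13
        | exact sum_S23
    push_cast
    linarith
  · refine ⟨{0, 1}, by decide, ?_⟩
    rw [Fin.sum_univ_five]
    simp only [eff_S01]
    norm_num [Matrix.cons_val_zero, Matrix.cons_val_one, Matrix.cons_val_two, Matrix.cons_val_three, Matrix.cons_val_four]

lemma vJ3 : vJoint xT1 yT1 3 = 1 := by
  refine le_antisymm (Real.sSup_le ?_ (by norm_num)) (le_csSup (vJbdd 3) ?_)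
  · rintro t ⟨S, hS, rfl⟩
    have h := fun k => eff_le_one k S
    rw [Fin.sum_univ_five]
    push_cast
    linarith [h 0, h 1, h 2, h 3, h 4]
  · refine ⟨{1, 2, 3}, by decide, ?_⟩
    rw [Fin.sum_univ_five]
    simp only [eff_S123]
    norm_num

/-- The joint selection value `v(p)` is not concave in `p` in general:
for the Table 1 instance, `v(1) = 4/5`, `v(2) = 13/15`, `v(3) = 1`, so that
`v(3) − v(2) > v(2) − v(1)`. -/
theorem table1_vJoint_not_concave :
    vJoint xT1 yT1 1 = 4 / 5 ∧
    vJoint xT1 yT1 2 = 13 / 15 ∧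
    vJoint xT1 yT1 3 = 1 ∧
    vJoint xT1 yT1 3 - vJoint xT1 yT1 2 > vJoint xT1 yT1 2 - vJoint xT1 yT1 1 := by
  refine ⟨vJ1, vJ2, vJ3, ?_⟩
  rw [vJ1, vJ2, vJ3]
  norm_num
end

section
/- The greedy nested feature selection procedure does not in general return the optimal joint selection: for the Table 2 instance, every 2-element output subset containing output 1 has average efficiency strictly less than 1 (both (1/4) Σ_{k=1}^4 E^(k)({1,2}) < 1 and (1/4) Σ_{k=1}^4 E^(k)({1,3}) < 1), whereas v(2) = 1 is attained by the subset {2, 3}; since the greedy procedure selects output 1 first, its value for p = 2 is strictly less than v(2). -/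
open Finset

/-- Table 2 instance: single input equal to 1 for each of the 4 DMUs. -/
def xT2 : Fin 4 → Fin 1 → ℝ := fun _ _ => 1

/-- Table 2 instance: the 3 outputs of the 4 DMUs. -/
noncomputable def yT2 : Fin 4 → Fin 3 → ℝ :=
  ![![0.85, 0.2, 0.8],
    ![0.95, 0.4, 0.6],
    ![0.9, 0.6, 0.4],
    ![1, 0.8, 0.2]]

lemma feas_facts {k : Fin 4} {S : Finset (Fin 3)} {α : Fin 1 → ℝ} {β : Fin 3 → ℝ}
    (h : DEAfeasible xT2 yT2 k S α β) :
    (∀ o, 0 ≤ β o) ∧ (∀ o, o ∉ S → β o = 0) ∧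
    (∀ j : Fin 4, β 0 * yT2 j 0 + β 1 * yT2 j 1 + β 2 * yT2 j 2 ≤ 1) := by
  obtain ⟨ha, hb, hz, hc, hn⟩ := h
  have hα : α 0 = 1 := by simpa [xT2, Fin.sum_univ_succ] using hn
  refine ⟨hb, hz, fun j => ?_⟩
  have := hc j
  simp [xT2, Fin.sum_univ_succ, hα] at this
  linarith [this]

lemma eff_eq (k : Fin 4) (S : Finset (Fin 3)) (b0 b1 b2 v : ℝ)
    (hb0 : 0 ≤ b0) (hb1 : 0 ≤ b1) (hb2 : 0 ≤ b2)
    (hz : ∀ o : Fin 3, o ∉ S → ![b0,b1,b2] o = 0)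
    (hcon : ∀ j : Fin 4, b0 * yT2 j 0 + b1 * yT2 j 1 + b2 * yT2 j 2 ≤ 1)
    (hval : b0 * yT2 k 0 + b1 * yT2 k 1 + b2 * yT2 k 2 = v)
    (hub : ∀ β : Fin 3 → ℝ, (∀ o, 0 ≤ β o) → (∀ o, o ∉ S → β o = 0) →
      (∀ j : Fin 4, β 0 * yT2 j 0 + β 1 * yT2 j 1 + β 2 * yT2 j 2 ≤ 1) →
      β 0 * yT2 k 0 + β 1 * yT2 k 1 + β 2 * yT2 k 2 ≤ v) :
    DEAeff xT2 yT2 k S = v := by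
  apply IsGreatest.csSup_eq
  constructor
  · refine ⟨fun _ => 1, ![b0,b1,b2], ⟨fun i => zero_le_one, ?_, hz, ?_, ?_⟩, ?_⟩
    · intro o; fin_cases o <;> assumption
    · intro j
      have := hcon j
      simp [xT2, Fin.sum_univ_three, Fin.sum_univ_succ]
      linarith
    · simp [xT2, Fin.sum_univ_succ]
    · rw [← hval]; simp [Fin.sum_univ_three]
  · rintro t ⟨α, β, hf, rfl⟩
    obtain ⟨hb, hz', hc⟩ := feas_facts hf
    have := hub β hb hz' hc
    rw [Fin.sum_univ_three]
    exact this

lemma eff01 : (DEAeff xT2 yT2 0 {0,1} = 0.85) ∧ (DEAeff xT2 yT2 1 {0,1} = 0.95) ∧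
    (DEAeff xT2 yT2 2 {0,1} = 0.9) ∧ (DEAeff xT2 yT2 3 {0,1} = 1) := by
  refine ⟨?_, ?_, ?_, ?_⟩
  · apply eff_eq 0 {0,1} 1 0 0 (0.85)
    · norm_num
    · norm_num
    · norm_num
    · intro o ho; fin_cases o <;> simp_all
    · intro j; fin_cases j <;> norm_num [yT2, Matrix.cons_val_two, Matrix.cons_val_three, Matrix.vecHead, Matrix.vecTail]
    · norm_num [yT2, Matrix.cons_val_two, Matrix.cons_val_three, Matrix.vecHead, Matrix.vecTail]
    · intro β hb hz hc
      have h3 := hc 3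
      have hz2 : β 2 = 0 := hz 2 (by decide)
      have := hb 1
      norm_num [yT2, Matrix.cons_val_two, Matrix.cons_val_three, Matrix.vecHead, Matrix.vecTail] at h3 ⊢
      linarith
  · apply eff_eq 1 {0,1} 1 0 0 (0.95)
    · norm_num
    · norm_num
    · norm_num
    · intro o ho; fin_cases o <;> simp_all
    · intro j; fin_cases j <;> norm_num [yT2, Matrix.cons_val_two, Matrix.cons_val_three, Matrix.vecHead, Matrix.vecTail]
    · norm_num [yT2, Matrix.cons_val_two, Matrix.cons_val_three, Matrix.vecHead, Matrix.vecTail]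
    · intro β hb hz hc
      have h3 := hc 3
      have hz2 : β 2 = 0 := hz 2 (by decide)
      have := hb 1
      norm_num [yT2, Matrix.cons_val_two, Matrix.cons_val_three, Matrix.vecHead, Matrix.vecTail] at h3 ⊢
      linarith
  · apply eff_eq 2 {0,1} 1 0 0 (0.9)
    · norm_num
    · norm_num
    · norm_num
    · intro o ho; fin_cases o <;> simp_all
    · intro j; fin_cases j <;> norm_num [yT2, Matrix.cons_val_two, Matrix.cons_val_three, Matrix.vecHead, Matrix.vecTail]
    · norm_num [yT2, Matrix.cons_val_two, Matrix.cons_val_three, Matrix.vecHead, Matrix.vecTail]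
    · intro β hb hz hc
      have h3 := hc 3
      have hz2 : β 2 = 0 := hz 2 (by decide)
      have := hb 1
      norm_num [yT2, Matrix.cons_val_two, Matrix.cons_val_three, Matrix.vecHead, Matrix.vecTail] at h3 ⊢
      linarith
  · apply eff_eq 3 {0,1} 1 0 0 (1)
    · norm_num
    · norm_num
    · norm_num
    · intro o ho; fin_cases o <;> simp_all
    · intro j; fin_cases j <;> norm_num [yT2, Matrix.cons_val_two, Matrix.cons_val_three, Matrix.vecHead, Matrix.vecTail]
    · norm_num [yT2, Matrix.cons_val_two, Matrix.cons_val_three, Matrix.vecHead, Matrix.vecTail]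
    · intro β hb hz hc
      have h3 := hc 3
      have hz2 : β 2 = 0 := hz 2 (by decide)
      have := hb 1
      norm_num [yT2, Matrix.cons_val_two, Matrix.cons_val_three, Matrix.vecHead, Matrix.vecTail] at h3 ⊢
      linarith

lemma eff02 : (DEAeff xT2 yT2 0 {0,2} = 1) ∧ (DEAeff xT2 yT2 1 {0,2} = 1) ∧
    (DEAeff xT2 yT2 2 {0,2} = 38/41) ∧ (DEAeff xT2 yT2 3 {0,2} = 1) := by
  refine ⟨?_, ?_, ?_, ?_⟩
  · apply eff_eq 0 {0,2} 0 0 1.25 1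
    · norm_num
    · norm_num
    · norm_num
    · intro o ho; fin_cases o <;> simp_all
    · intro j; fin_cases j <;> norm_num [yT2, Matrix.cons_val_two, Matrix.cons_val_three, Matrix.vecHead, Matrix.vecTail]
    · norm_num [yT2, Matrix.cons_val_two, Matrix.cons_val_three, Matrix.vecHead, Matrix.vecTail]
    · intro β hb hz hc
      have h0 := hc 0
      have hz1 : β 1 = 0 := hz 1 (by decide)
      norm_num [yT2, Matrix.cons_val_two, Matrix.cons_val_three, Matrix.vecHead, Matrix.vecTail] at h0 ⊢
      linarith
  · apply eff_eq 1 {0,2} (40/41) 0 (5/41) 1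
    · norm_num
    · norm_num
    · norm_num
    · intro o ho; fin_cases o <;> simp_all
    · intro j; fin_cases j <;> norm_num [yT2, Matrix.cons_val_two, Matrix.cons_val_three, Matrix.vecHead, Matrix.vecTail]
    · norm_num [yT2, Matrix.cons_val_two, Matrix.cons_val_three, Matrix.vecHead, Matrix.vecTail]
    · intro β hb hz hc
      have h1 := hc 1
      have hz1 : β 1 = 0 := hz 1 (by decide)
      norm_num [yT2, Matrix.cons_val_two, Matrix.cons_val_three, Matrix.vecHead, Matrix.vecTail] at h1 ⊢
      linarith
  · apply eff_eq 2 {0,2} (40/41) 0 (5/41) (38/41)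
    · norm_num
    · norm_num
    · norm_num
    · intro o ho; fin_cases o <;> simp_all
    · intro j; fin_cases j <;> norm_num [yT2, Matrix.cons_val_two, Matrix.cons_val_three, Matrix.vecHead, Matrix.vecTail]
    · norm_num [yT2, Matrix.cons_val_two, Matrix.cons_val_three, Matrix.vecHead, Matrix.vecTail]
    · intro β hb hz hc
      have h1 := hc 1
      have h3 := hc 3
      have hz1 : β 1 = 0 := hz 1 (by decide)
      norm_num [yT2, Matrix.cons_val_two, Matrix.cons_val_three, Matrix.vecHead, Matrix.vecTail] at h1 h3 ⊢
      linarith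
  · apply eff_eq 3 {0,2} 1 0 0 1
    · norm_num
    · norm_num
    · norm_num
    · intro o ho; fin_cases o <;> simp_all
    · intro j; fin_cases j <;> norm_num [yT2, Matrix.cons_val_two, Matrix.cons_val_three, Matrix.vecHead, Matrix.vecTail]
    · norm_num [yT2, Matrix.cons_val_two, Matrix.cons_val_three, Matrix.vecHead, Matrix.vecTail]
    · intro β hb hz hc
      have h3 := hc 3
      have hz1 : β 1 = 0 := hz 1 (by decide)
      norm_num [yT2, Matrix.cons_val_two, Matrix.cons_val_three, Matrix.vecHead, Matrix.vecTail] at h3 ⊢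
      linarith

lemma eff12 : ∀ k : Fin 4, DEAeff xT2 yT2 k {1,2} = 1 := by
  intro k
  apply eff_eq k {1,2} 0 1 1 1
  · norm_num
  · norm_num
  · norm_num
  · intro o ho; fin_cases o <;> simp_all
  · intro j; fin_cases j <;> norm_num [yT2, Matrix.cons_val_two, Matrix.cons_val_three, Matrix.vecHead, Matrix.vecTail]
  · fin_cases k <;> norm_num [yT2, Matrix.cons_val_two, Matrix.cons_val_three, Matrix.vecHead, Matrix.vecTail]
  · intro β hb hz hc
    exact hc k

lemma DEAeff_le_one (k : Fin 4) (S : Finset (Fin 3)) : DEAeff xT2 yT2 k S ≤ 1 := by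
  apply Real.sSup_le
  · rintro t ⟨α, β, hf, rfl⟩
    obtain ⟨hb, hz, hc⟩ := feas_facts hf
    rw [Fin.sum_univ_three]
    exact hc k
  · norm_num

/-- The greedy nested procedure is not optimal in general: for the Table 2
instance, every 2-element output subset containing output 1 (zero-indexed `0`) has
average efficiency strictly below `1`, whereas `v(2) = 1` is attained by the subset
`{2,3}` (zero-indexed `{1,2}`); since the greedy procedure selects output 1 first, its
value for `p = 2` is strictly less than `v(2)`. -/
theorem table2_greedy_not_optimal :
    (1 / 4 : ℝ) * (∑ k, DEAeff xT2 yT2 k {0, 1}) < 1 ∧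
    (1 / 4 : ℝ) * (∑ k, DEAeff xT2 yT2 k {0, 2}) < 1 ∧
    vJoint xT2 yT2 2 = 1 ∧
    (1 / 4 : ℝ) * (∑ k, DEAeff xT2 yT2 k {1, 2}) = 1 ∧
    (∀ S : Finset (Fin 3), S.card = 2 → (0 : Fin 3) ∈ S →
      (1 / 4 : ℝ) * (∑ k, DEAeff xT2 yT2 k S) < vJoint xT2 yT2 2) := by
  obtain ⟨e010, e011, e012, e013⟩ := eff01
  obtain ⟨e020, e021, e022, e023⟩ := eff02
  have h01 : (1 / 4 : ℝ) * (∑ k, DEAeff xT2 yT2 k {0, 1}) < 1 := by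
    rw [Fin.sum_univ_four, e010, e011, e012, e013]; norm_num
  have h02 : (1 / 4 : ℝ) * (∑ k, DEAeff xT2 yT2 k {0, 2}) < 1 := by
    rw [Fin.sum_univ_four, e020, e021, e022, e023]; norm_num
  have h12 : (1 / 4 : ℝ) * (∑ k, DEAeff xT2 yT2 k {1, 2}) = 1 := by
    rw [Fin.sum_univ_four, eff12 0, eff12 1, eff12 2, eff12 3]; norm_num
  have hv : vJoint xT2 yT2 2 = 1 := by
    apply IsGreatest.csSup_eq
    constructor
    · refine ⟨{1,2}, by decide, ?_⟩
      rw [Fin.sum_univ_four, eff12 0, eff12 1, eff12 2, eff12 3]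
      norm_num
    · rintro t ⟨S, hS, rfl⟩
      have h0 := DEAeff_le_one 0 S
      have h1 := DEAeff_le_one 1 S
      have h2 := DEAeff_le_one 2 S
      have h3 := DEAeff_le_one 3 S
      rw [Fin.sum_univ_four, show ((4:ℕ):ℝ) = 4 by norm_num]
      linarith
  refine ⟨h01, h02, hv, h12, ?_⟩
  intro S hcard h0S
  have : S = {0,1} ∨ S = {0,2} := by
    revert hcard h0S; revert S; decide
  rw [hv]
  rcases this with rfl | rfl
  · exact h01
  · exact h02
end
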